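/- arXiv:1504.03380 — 2 statements merged into one kernel-verified Lean document; each statement's English description precedes it below -/
import Mathlib

section
/- Let B be a metrizable, second-countable topological space whose topology has a basis of clopen sets (a zero-dimensional separable metrizable space), let F be a sheaf of types on B, and let U ⊆ B be open. Then F(U) is nonempty if and only if U ⊆ Supp F, i.e., if and only if every point of U has an open neighborhood V with F(V) nonempty. -/
open TopologicalSpace

/-- A presheaf of types on a topological space `B`. -/
structure Psh (B : Type) [TopologicalSpace B] where
  obj : Opens B → Type
  res : ∀ {U V : Opens B}, V ≤ U → obj U → obj V
  res_id : ∀ (U : Opens B) (x : obj U), res le_rfl x = x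
  res_comp : ∀ {U V W : Opens B} (hWV : W ≤ V) (hVU : V ≤ U) (x : obj U),
    res hWV (res hVU x) = res (hWV.trans hVU) x

namespace Psh

variable {B : Type} [TopologicalSpace B]

/-- The sheaf conditions: separation and gluing for arbitrary open covers. -/
def IsSheaf (F : Psh B) : Prop :=
  ∀ {ι : Type} (U : Opens B) (V : ι → Opens B) (hV : ∀ i, V i ≤ U),
    (∀ x ∈ U, ∃ i, x ∈ V i) →
    (∀ s t : F.obj U, (∀ i, F.res (hV i) s = F.res (hV i) t) → s = t) ∧
    ∀ sf : ∀ i, F.obj (V i),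
      (∀ i j, F.res (inf_le_left : V i ⊓ V j ≤ V i) (sf i)
            = F.res (inf_le_right : V i ⊓ V j ≤ V j) (sf j)) →
      ∃ s : F.obj U, ∀ i, F.res (hV i) s = sf i

/-- The support of a presheaf: the union of all open sets with nonempty sections. -/
def supp (F : Psh B) : Set B := {b | ∃ U : Opens B, b ∈ U ∧ Nonempty (F.obj U)}

/-- The germ relation at a point. -/
def stalkRel (F : Psh B) (b : B) :
    (Σ U : {U : Opens B // b ∈ U}, F.obj U.1) →
      (Σ U : {U : Opens B // b ∈ U}, F.obj U.1) → Prop :=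
  fun x y => ∃ (W : Opens B) (_ : b ∈ W) (h1 : W ≤ x.1.1) (h2 : W ≤ y.1.1),
    F.res h1 x.2 = F.res h2 y.2

/-- The stalk of a presheaf at a point: the set of germs, i.e. the colimit of
sections over open neighborhoods of the point. -/
def stalk (F : Psh B) (b : B) : Type := Quot (F.stalkRel b)

/-- The germ of a section at a point. -/
def germ (F : Psh B) {b : B} {U : Opens B} (hb : b ∈ U) (s : F.obj U) : F.stalk b :=
  Quot.mk _ ⟨⟨U, hb⟩, s⟩

/-- A morphism of presheaves `F|_U → G|_U` (restricted to opens contained in `U`). -/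
structure Hom (F G : Psh B) (U : Opens B) where
  app : ∀ (V : Opens B), V ≤ U → F.obj V → G.obj V
  natural : ∀ {V W : Opens B} (hVU : V ≤ U) (hWV : W ≤ V) (s : F.obj V),
    G.res hWV (app V hVU s) = app W (hWV.trans hVU) (F.res hWV s)

/-- The Hom-presheaf `U ↦ {presheaf morphisms F|_U → G|_U}`. -/
def homPsh (F G : Psh B) : Psh B where
  obj U := Hom F G U
  res {U V} h φ :=
    { app := fun W hW => φ.app W (hW.trans h)
      natural := fun hVU hWV s => φ.natural _ hWV s }
  res_id := fun U φ => rfl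
  res_comp := fun _ _ _ => rfl

/-- Objectwise binary product of presheaves. -/
def prodObj (F G : Psh B) : Psh B where
  obj U := F.obj U × G.obj U
  res h x := (F.res h x.1, G.res h x.2)
  res_id U x := by rw [F.res_id, G.res_id]
  res_comp h1 h2 x := by dsimp only; rw [F.res_comp, G.res_comp]

/-- Objectwise binary coproduct of presheaves. -/
def sumObj (F G : Psh B) : Psh B where
  obj U := F.obj U ⊕ G.obj U
  res h x := x.elim (fun a => Sum.inl (F.res h a)) (fun c => Sum.inr (G.res h c))
  res_id U x := by
    cases x with
    | inl a => simp only [Sum.elim_inl]; rw [F.res_id]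
    | inr c => simp only [Sum.elim_inr]; rw [G.res_id]
  res_comp h1 h2 x := by
    cases x with
    | inl a => simp only [Sum.elim_inl]; rw [F.res_comp]
    | inr c => simp only [Sum.elim_inr]; rw [G.res_comp]

/-- Objectwise product of a family of presheaves. -/
def piObj {ι : Type} (F : ι → Psh B) : Psh B where
  obj U := ∀ i, (F i).obj U
  res h x i := (F i).res h (x i)
  res_id U x := by funext i; exact (F i).res_id U (x i)
  res_comp h1 h2 x := by funext i; exact (F i).res_comp h1 h2 (x i)

/-- Objectwise coproduct (disjoint union) of a family of presheaves. -/
def sigmaObj {ι : Type} (F : ι → Psh B) : Psh B where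
  obj U := Σ i, (F i).obj U
  res h x := ⟨x.1, (F x.1).res h x.2⟩
  res_id U x := by
    rcases x with ⟨i, s⟩
    exact congrArg (Sigma.mk i) ((F i).res_id U s)
  res_comp h1 h2 x := by
    rcases x with ⟨i, s⟩
    exact congrArg (Sigma.mk i) ((F i).res_comp h1 h2 s)

/-- The characteristic presheaf of an open set: a one-element type on opens
contained in `W`, the empty type elsewhere. -/
def char (W : Opens B) : Psh B where
  obj U := PLift (U ≤ W)
  res h x := ⟨h.trans x.down⟩
  res_id U x := rfl
  res_comp _ _ _ := rfl

/-- An isomorphism of presheaves. -/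
structure Iso (F G : Psh B) where
  hom : ∀ U, F.obj U ≃ G.obj U
  natural : ∀ {U V : Opens B} (h : V ≤ U) (s : F.obj U),
    G.res h (hom U s) = hom V (F.res h s)

end Psh

theorem Psh.eq_of_empty {B : Type} [TopologicalSpace B] {F : Psh B}
    (hF : F.IsSheaf) {V : Opens B} (hV : (V : Set B) = ∅) (s t : F.obj V) : s = t := by
  obtain ⟨sep, _⟩ := hF V (fun i : Empty => i.elim) (fun i => i.elim)
    (fun x hx => by rw [← SetLike.mem_coe, hV] at hx; exact hx.elim)
  exact sep s t (fun i => i.elim)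

/-- Over a zero-dimensional separable metrizable space, a sheaf has a section over
an open set `U` iff `U` is contained in its support. -/
theorem stmt_9 {B : Type} [TopologicalSpace B] [MetrizableSpace B]
    [SecondCountableTopology B]
    (hclopen : IsTopologicalBasis {s : Set B | IsClopen s})
    (F : Psh B) (hF : F.IsSheaf) (U : Opens B) :
    Nonempty (F.obj U) ↔ (U : Set B) ⊆ F.supp := by
  classical
  constructor
  · rintro ⟨s⟩ b hb
    exact ⟨U, hb, ⟨s⟩⟩
  · intro hsub
    choose V hmemV hne using fun b : U => hsub b.2
    choose W hWc hbW hWsub using fun b : U =>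
      hclopen.exists_subset_of_mem_open
        (show (b : B) ∈ (V b : Set B) ∩ U from ⟨hmemV b, b.2⟩)
        (((V b).2).inter U.2)
    by_cases hUe : (U : Set B) = ∅
    · obtain ⟨_, glue⟩ := hF U (fun i : Empty => i.elim) (fun i => i.elim)
        (fun x hx => by rw [← SetLike.mem_coe, hUe] at hx; exact hx.elim)
      obtain ⟨s, _⟩ := glue (fun i => i.elim) (fun i => i.elim)
      exact ⟨s⟩
    · have hWU : ∀ b : U, W b ⊆ (U : Set B) :=
        fun b => (hWsub b).trans Set.inter_subset_right
      have hUcov : ⋃ b, W b = (U : Set B) := by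
        apply subset_antisymm (Set.iUnion_subset hWU)
        intro x hx; exact Set.mem_iUnion.2 ⟨⟨x, hx⟩, hbW _⟩
      obtain ⟨T, hTc, hTeq⟩ :=
        TopologicalSpace.isOpen_iUnion_countable W (fun b => (hWc b).2)
      have hTne : T.Nonempty := by
        obtain ⟨x, hx⟩ := Set.nonempty_iff_ne_empty.2 hUe
        rw [← hUcov, ← hTeq] at hx
        obtain ⟨b, hb, -⟩ := Set.mem_iUnion₂.1 hx
        exact ⟨b, hb⟩
      obtain ⟨f, hfT⟩ := hTc.exists_eq_range hTne
      have hcov : ∀ x ∈ (U : Set B), ∃ n : ℕ, x ∈ W (f n) := by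
        intro x hx
        rw [← hUcov, ← hTeq, hfT] at hx
        obtain ⟨b, ⟨n, rfl⟩, hxb⟩ := Set.mem_iUnion₂.1 hx
        exact ⟨n, hxb⟩
      -- disjointify
      set D : ℕ → Set B := fun n => W (f n) \ ⋃ m, ⋃ (_ : m < n), W (f m) with hD
      have hDopen : ∀ n, IsOpen (D n) := by
        intro n
        exact (hWc (f n)).2.sdiff
          (Set.Finite.isClosed_biUnion (Set.finite_lt_nat n)
            (fun m _ => (hWc (f m)).1))
      have hDsub : ∀ n, D n ⊆ W (f n) := fun n => Set.diff_subset
      have hDdisj : ∀ i j, i ≠ j → D i ∩ D j = ∅ := by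
        have key : ∀ i j, i < j → D i ∩ D j = ∅ := by
          intro i j hij
          ext x
          simp only [Set.mem_inter_iff, Set.mem_empty_iff_false, iff_false, not_and]
          intro hxi hxj
          exact hxj.2 (Set.mem_iUnion₂.2 ⟨i, hij, hxi.1⟩)
        intro i j hij
        rcases lt_or_gt_of_ne hij with h | h
        · exact key i j h
        · rw [Set.inter_comm]; exact key j i h
      set VV : ℕ → Opens B := fun n => ⟨D n, hDopen n⟩ with hVV
      have hVle : ∀ n, VV n ≤ U := fun n x hx => hWU (f n) (hDsub n hx)
      have hVVcov : ∀ x ∈ U, ∃ n, x ∈ VV n := by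
        intro x hx
        obtain ⟨n, hn⟩ := hcov x hx
        have hpred : ∃ n, x ∈ W (f n) := ⟨n, hn⟩
        refine ⟨Nat.find hpred, Nat.find_spec hpred, ?_⟩
        intro hmem
        obtain ⟨m, hm, hxm⟩ := Set.mem_iUnion₂.1 hmem
        exact Nat.find_min hpred hm hxm
      obtain ⟨_, glue⟩ := hF U VV hVle hVVcov
      have hVleV : ∀ n, VV n ≤ V (f n) :=
        fun n x hx => ((hWsub (f n)) (hDsub n hx)).1
      set sf : ∀ n, F.obj (VV n) :=
        fun n => F.res (hVleV n) (hne (f n)).some with hsf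
      have hcompat : ∀ i j, F.res (inf_le_left : VV i ⊓ VV j ≤ VV i) (sf i)
          = F.res (inf_le_right : VV i ⊓ VV j ≤ VV j) (sf j) := by
        intro i j
        rcases eq_or_ne i j with rfl | hij
        · rfl
        · apply Psh.eq_of_empty hF
          show (D i ∩ D j : Set B) = ∅
          exact hDdisj i j hij
      obtain ⟨s, -⟩ := glue sf hcompat
      exact ⟨s⟩
end

section
/- Let B be a topological space, let F be a presheaf of types on B such that F(U) has at most one element for every open U (e.g., F is the characteristic presheaf of an open set), and let (F_i)_{i ∈ I} be any family of presheaves of types on B. Then there exists a presheaf morphism ∏_i (F ⊔ F_i) → F ⊔ ∏_i F_i, where ⊔ denotes the objectwise coproduct and ∏ the objectwise product. (Hence presheaf-valued models satisfy the Negative Constant Domain Principle ∀x(¬α ∨ π(x)) → ¬α ∨ ∀x π(x).) -/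
open TopologicalSpace

/-- The Negative Constant Domain Principle in presheaf-valued models: if `F` has
at most one section over every open set, then there is a presheaf morphism
`∏ᵢ (F ⊔ Fᵢ) → F ⊔ ∏ᵢ Fᵢ`. -/
theorem stmt_19 {B : Type} [TopologicalSpace B] (F : Psh B)
    (hF : ∀ U : Opens B, Subsingleton (F.obj U)) {ι : Type} (Fi : ι → Psh B) :
    Nonempty (Psh.Hom (Psh.piObj (fun i => Psh.sumObj F (Fi i)))
      (Psh.sumObj F (Psh.piObj Fi)) ⊤) := by
  classical
  have nonemptyF : ∀ {V : Opens B} (x : (Psh.piObj (fun i => Psh.sumObj F (Fi i))).obj V),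
      (¬ ∀ i, ∃ c, x i = Sum.inr c) → Nonempty (F.obj V) := by
    intro V x h
    by_contra hne
    refine h (fun i => ?_)
    rcases hxi : x i with a | c
    · exact absurd ⟨a⟩ hne
    · exact ⟨c, rfl⟩
  -- the condition "all components are inr" is preserved by restriction, both ways
  have cond_iff : ∀ {V W : Opens B} (hWV : W ≤ V)
      (x : (Psh.piObj (fun i => Psh.sumObj F (Fi i))).obj V),
      (∀ i, ∃ c, ((Psh.piObj (fun i => Psh.sumObj F (Fi i))).res hWV x) i = Sum.inr c) ↔
      (∀ i, ∃ c, x i = Sum.inr c) := by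
    intro V W hWV x
    constructor
    · intro h i
      obtain ⟨c, hc⟩ := h i
      rcases hxi : x i with a | c'
      · exfalso
        have : ((Psh.piObj (fun i => Psh.sumObj F (Fi i))).res hWV x) i
            = Sum.inl (F.res hWV a) := by
          show (Psh.sumObj F (Fi i)).res hWV (x i) = _
          rw [hxi]; rfl
        rw [this] at hc; exact nomatch hc
      · exact ⟨c', rfl⟩
    · intro h i
      obtain ⟨c, hc⟩ := h i
      refine ⟨(Fi i).res hWV c, ?_⟩
      show (Psh.sumObj F (Fi i)).res hWV (x i) = _
      rw [hc]; rfl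
  refine ⟨⟨fun V _ x =>
    if h : ∀ i, ∃ c, x i = Sum.inr c then Sum.inr (fun i => (h i).choose)
    else Sum.inl (Classical.choice (nonemptyF x h)), ?_⟩⟩
  intro V W hVU hWV x
  by_cases h : ∀ i, ∃ c, x i = Sum.inr c
  · have h' : ∀ i, ∃ c, ((Psh.piObj (fun i => Psh.sumObj F (Fi i))).res hWV x) i = Sum.inr c :=
      (cond_iff hWV x).2 h
    erw [dif_pos h, dif_pos h']
    show Sum.inr ((Psh.piObj Fi).res hWV fun i => (h i).choose) = _
    congr 1
    funext i
    have h1 := (h i).choose_spec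
    have h2 := (h' i).choose_spec
    have : ((Psh.piObj (fun i => Psh.sumObj F (Fi i))).res hWV x) i
        = Sum.inr ((Fi i).res hWV (h i).choose) :=
      congrArg ((Psh.sumObj F (Fi i)).res hWV) h1
    exact Sum.inr.inj (this.symm.trans h2)
  · have h' : ¬ ∀ i, ∃ c, ((Psh.piObj (fun i => Psh.sumObj F (Fi i))).res hWV x) i = Sum.inr c :=
      fun hh => h ((cond_iff hWV x).1 hh)
    erw [dif_neg h, dif_neg h']
    show Sum.inl (F.res hWV _) = Sum.inl _
    exact congrArg Sum.inl ((hF W).elim _ _)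
end
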